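/- Semantic soundness of the induction rule for star: Let S be a type (of states), T a set of traces over S, and V a set of states. If V ⊆ box(T, V), then V ⊆ box(T*, V); that is, if from every state in V every trace of T starting there ends in V, then from every state in V every trace of T* starting there ends in V. -/

import Mathlib

/-- A trace over a type `S` of states is a nonempty finite list of elements of `S`. -/
def Trace (S : Type*) := {l : List S // l ≠ []}

namespace Trace

variable {S : Type*}

/-- The head (first element) of a trace. -/
def head (t : Trace S) : S := t.1.head t.2

/-- The last element of a trace. -/
def last (t : Trace S) : S := t.1.getLast t.2

/-- Fusion of two traces: `t₁ ∘ t₂ = t₁ ++ tail t₂` (meaningful when `last t₁ = head t₂`). -/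
def fuse (t₁ t₂ : Trace S) : Trace S :=
  ⟨t₁.1 ++ t₂.1.tail, by simp [t₁.2]⟩

end Trace

variable {S : Type*}

/-- Fusion product of two sets of traces. -/
def fprod (T₁ T₂ : Set (Trace S)) : Set (Trace S) :=
  {t | ∃ t₁ ∈ T₁, ∃ t₂ ∈ T₂, t₁.last = t₂.head ∧ t = t₁.fuse t₂}

/-- The set `I` of all length-1 traces `[s]`, `s ∈ S`. -/
def unitTraces (S : Type*) : Set (Trace S) := {t | ∃ s : S, t.1 = [s]}

/-- Powers of a set of traces under the fusion product: `T⁰ = I`, `Tⁿ⁺¹ = T ∘ Tⁿ`. -/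
def fpow (T : Set (Trace S)) : ℕ → Set (Trace S)
  | 0 => unitTraces S
  | n + 1 => fprod T (fpow T n)

/-- Star of a set of traces under the fusion product: `T* = ⋃ n, Tⁿ`. -/
def fstar (T : Set (Trace S)) : Set (Trace S) := ⋃ n, fpow T n

/-- `box T V`: states from which every trace of `T` ends in `V`. -/
def box (T : Set (Trace S)) (V : Set S) : Set S :=
  {s | ∀ t ∈ T, t.head = s → t.last ∈ V}

/-- `diamond T V`: states from which some trace of `T` ends in `V`. -/
def diamond (T : Set (Trace S)) (V : Set S) : Set S :=
  {s | ∃ t ∈ T, t.head = s ∧ t.last ∈ V}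

/-- `boxAlways T V`: states from which every trace of `T` lies entirely in `V`. -/
def boxAlways (T : Set (Trace S)) (V : Set S) : Set S :=
  {s | ∀ t ∈ T, t.head = s → ∀ x ∈ t.1, x ∈ V}


lemma Trace.head_fuse (t₁ t₂ : Trace S) : (t₁.fuse t₂).head = t₁.head := by
  obtain ⟨l, hl⟩ := t₁
  cases l with
  | nil => exact absurd rfl hl
  | cons a l => rfl

lemma Trace.last_fuse (t₁ t₂ : Trace S) (h : t₁.last = t₂.head) :
    (t₁.fuse t₂).last = t₂.last := by
  obtain ⟨l, hl⟩ := t₂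
  cases l with
  | nil => exact absurd rfl hl
  | cons a l =>
    cases l with
    | nil =>
      simp only [Trace.fuse, Trace.last, List.tail, List.append_nil]
      simpa [Trace.last, Trace.head] using h
    | cons b l =>
      simp only [Trace.fuse, Trace.last, Trace.head, List.tail]
      rw [List.getLast_append_of_ne_nil _ (by simp)]
      simp [List.getLast_cons]

/-- semantic soundness of the induction rule for star. -/
theorem box_star_induction {S : Type*} (T : Set (Trace S)) (V : Set S)
    (h : V ⊆ box T V) : V ⊆ box (fstar T) V := by
  intro s hs t ht hhead
  obtain ⟨n, hn⟩ := Set.mem_iUnion.mp ht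
  induction n generalizing t s with
  | zero =>
    obtain ⟨x, hx⟩ := hn
    have : t.head = t.last := by simp [Trace.head, Trace.last, hx]
    rw [Trace.last] at this ⊢
    rw [← this, hhead]; exact hs
  | succ n ih =>
    obtain ⟨t₁, ht₁, t₂, ht₂, hmatch, rfl⟩ := hn
    rw [Trace.last_fuse _ _ hmatch]
    have h1 : t₁.last ∈ V := h hs t₁ ht₁ (by rw [← hhead, Trace.head_fuse])
    exact ih (hmatch ▸ h1) t₂ (Set.mem_iUnion.mpr ⟨n, ht₂⟩) rfl ht₂
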